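/- Let H be a hypergraph, k a number, and C a k-pseudo-core of level L of H. Then every hitting set X of H with |X| ≤ k satisfies X ∩ C ≠ ∅. -/

import Mathlib

/-- A sunflower with core `C`. -/
def IsSunflower {V : Type*} [DecidableEq V] (S : Finset (Finset V)) (C : Finset V) : Prop :=
  (∀ p ∈ S, C ⊂ p) ∧ ∀ p ∈ S, ∀ q ∈ S, p ≠ q → p ∩ q = C

/-- The `k`-cores of a hypergraph: cores of sunflowers with more than `k` petals. -/
def KCores {V : Type*} [DecidableEq V] (k : ℕ) (E : Set (Finset V)) : Set (Finset V) :=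
  {C | ∃ S : Finset (Finset V), ↑S ⊆ E ∧ k < S.card ∧ IsSunflower S C}

/-- A `T^k_L`-pseudo-sunflower for the hypergraph `E` with pseudo-core `C`.
The leaves of the complete `(k+1)`-ary tree `T^k_L` of depth `L` are encoded as
the sequences `Fin L → Fin (k+1)` of child choices along the root-to-leaf path;
the first depth at which the paths to two leaves `l ≠ m` diverge is `z + 1`
where `z` is the least index with `l z ≠ m z`. -/
def IsPseudoSunflower {V : Type*} [DecidableEq V] (E : Set (Finset V)) (k L : ℕ)
    (C : Finset V) (S : (Fin L → Fin (k + 1)) → ℕ → Finset V) : Prop :=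
  (∀ l, S l 0 = C) ∧
  (∀ l, (Finset.range (L + 1)).biUnion (S l) ∈ E) ∧
  (∀ l, ∀ i j : ℕ, i < j → j ≤ L → S l i ∩ S l j = ∅) ∧
  (∀ l, ∀ i : ℕ, 1 ≤ i → i ≤ L → (S l i).Nonempty) ∧
  (∀ l m : Fin L → Fin (k + 1), ∀ z : Fin L,
    (∀ z' : Fin L, z' < z → l z' = m z') → l z ≠ m z →
      S l (z.val + 1) ∩ S m (z.val + 1) = ∅)

/-- The `k`-pseudo-cores of level `L` of the hypergraph `E`. -/
def PseudoCores {V : Type*} [DecidableEq V] (E : Set (Finset V)) (k L : ℕ) :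
    Set (Finset V) :=
  {C | ∃ S, IsPseudoSunflower E k L C S}

/-- `X` is a hitting set of the hypergraph with edge set `E`. -/
def HitsAll {V : Type*} [DecidableEq V] (X : Finset V) (E : Set (Finset V)) : Prop :=
  ∀ e ∈ E, (e ∩ X).Nonempty

/-- Every hitting set of `H` of size at most `k` hits every `k`-pseudo-core of
any level `L`. -/
theorem hitting_set_hits_pseudoCore {V : Type*} [DecidableEq V]
    (E : Set (Finset V)) (k L : ℕ) (C : Finset V) (hC : C ∈ PseudoCores E k L)
    (X : Finset V) (hX : HitsAll X E) (hXcard : X.card ≤ k) :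
    (X ∩ C).Nonempty := by
  obtain ⟨S, hS0, hSE, _hSdisj, _hSne, hSdiv⟩ := hC
  have key : ∀ j, j ≤ L → ∀ l : Fin L → Fin (k + 1),
      ∃ m : Fin L → Fin (k + 1), (∀ i : Fin L, (i : ℕ) < L - j → m i = l i) ∧
        (X ∩ (Finset.range (L - j + 1)).biUnion (S m)).Nonempty := by
    intro j
    induction j with
    | zero =>
      intro _ l
      refine ⟨l, fun i _ => rfl, ?_⟩
      obtain ⟨x, hx⟩ := hX _ (hSE l)
      rw [Finset.mem_inter] at hx
      exact ⟨x, Finset.mem_inter.mpr ⟨hx.2, by simpa using hx.1⟩⟩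
    | succ j ih =>
      intro hj l
      have hjL : j ≤ L := by omega
      set D := L - (j + 1) with hDdef
      have hDL : D < L := by omega
      have hD1 : D + 1 = L - j := by omega
      by_contra hcon
      push_neg at hcon
      -- For each child c, get a leaf hitting at depth D+1, with the hit forced at level D+1
      have hch : ∀ c : Fin (k + 1), ∃ m : Fin L → Fin (k + 1), ∃ x : V,
          x ∈ X ∧ x ∈ S m (D + 1) ∧
          (∀ i : Fin L, (i : ℕ) < D → m i = l i) ∧ m ⟨D, hDL⟩ = c := by
        intro c
        set lc : Fin L → Fin (k + 1) := fun i => if (i : ℕ) = D then c else l i with hlc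
        obtain ⟨m, hm1, hm2⟩ := ih hjL lc
        rw [← hD1] at hm1 hm2
        have hml : ∀ i : Fin L, (i : ℕ) < D → m i = l i := by
          intro i hi
          rw [hm1 i (by omega)]
          simp [hlc, Nat.ne_of_lt hi]
        have hmD : m ⟨D, hDL⟩ = c := by
          rw [hm1 ⟨D, hDL⟩ (by simp)]
          simp [hlc]
        have hempty := hcon m hml
        obtain ⟨x, hx⟩ := hm2
        rw [Finset.mem_inter, Finset.mem_biUnion] at hx
        obtain ⟨hxX, i, hi, hxS⟩ := hx
        rw [Finset.mem_range] at hi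
        have hiD : i = D + 1 := by
          by_contra hne
          have : x ∈ X ∩ (Finset.range (D + 1)).biUnion (S m) := by
            rw [Finset.mem_inter, Finset.mem_biUnion]
            exact ⟨hxX, i, Finset.mem_range.mpr (by omega), hxS⟩
          rw [hempty] at this
          exact absurd this (Finset.notMem_empty x)
        exact ⟨m, x, hxX, hiD ▸ hxS, hml, hmD⟩
      choose m x hxX hxS hml hmD using hch
      -- The x c are pairwise distinct elements of X : contradiction with |X| ≤ k
      have hinj : Function.Injective x := by
        intro c c' hcc
        by_contra hne
        have hdisj := hSdiv (m c) (m c') ⟨D, hDL⟩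
          (fun z' hz' => by rw [hml c z' hz', hml c' z' hz'])
          (by rw [hmD c, hmD c']; exact hne)
        have : x c ∈ S (m c) (D + 1) ∩ S (m c') (D + 1) :=
          Finset.mem_inter.mpr ⟨hxS c, hcc ▸ hxS c'⟩
        rw [hdisj] at this
        exact absurd this (Finset.notMem_empty _)
      have : (Finset.univ : Finset (Fin (k + 1))).card ≤ X.card :=
        Finset.card_le_card_of_injOn x (fun c _ => hxX c) (Function.Injective.injOn hinj)
      simp at this
      omega
  obtain ⟨m, _, hm2⟩ := key L le_rfl (fun _ => 0)
  simpa [Nat.sub_self, hS0 m, Finset.inter_comm] using hm2
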